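/- Let G be a finite simple graph with vertices u, v, w such that vw ∈ E(G), uw ∉ E(G), u ≠ w, u ≠ v, and deg_G(u) ≥ deg_G(v). Let G' = G − {vw} + {uw}. Then the non-increasing degree sequence of G is majorized by that of G', and the two degree sequences are not equal. -/

import Mathlib

open scoped Classical

lemma topk_bound : ∀ (l : List ℕ), l.Pairwise (· ≥ ·) → ∀ (k : ℕ) (X : Multiset ℕ),
    X ≤ ↑l → Multiset.card X ≤ k → X.sum ≤ (l.take k).sum := by
  intro l
  induction l with
  | nil =>
    intro _ k X hX _
    have : X = 0 := le_bot_iff.mp (by simpa using hX)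
    simp [this]
  | cons a l ih =>
    intro hl k X hX hcard
    have hl' : l.Pairwise (· ≥ ·) := hl.of_cons
    have ha : ∀ x ∈ l, x ≤ a := (List.pairwise_cons.mp hl).1
    cases k with
    | zero =>
      have : X = 0 := Multiset.card_eq_zero.mp (Nat.le_zero.mp hcard)
      simp [this]
    | succ k =>
      by_cases hmem : a ∈ X
      · have h1 : X.erase a ≤ ↑l := by
          have := Multiset.erase_le_erase a hX
          rwa [show ((a :: l : List ℕ) : Multiset ℕ) = a ::ₘ ↑l from rfl,
            Multiset.erase_cons_head] at this
        have hXc : Multiset.card X = Multiset.card (X.erase a) + 1 := by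
          conv_lhs => rw [← Multiset.cons_erase hmem]
          rw [Multiset.card_cons]
        have h2 : Multiset.card (X.erase a) ≤ k := by omega
        have hs : X.sum = a + (X.erase a).sum := by
          conv_lhs => rw [← Multiset.cons_erase hmem]
          rw [Multiset.sum_cons]
        rw [hs, List.take_succ_cons, List.sum_cons]
        exact Nat.add_le_add_left (ih hl' k _ h1 h2) a
      · have h1 : X ≤ ↑l := (Multiset.le_cons_of_notMem hmem).mp hX
        have key : X.sum ≤ (l.take (k+1)).sum := ih hl' (k+1) X h1 hcard
        refine key.trans ?_
        rw [List.take_succ_cons, List.sum_cons]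
        rcases lt_or_ge k l.length with h | h
        · rw [List.sum_take_succ _ _ h]
          have := ha _ (List.getElem_mem h)
          omega
        · rw [List.take_of_length_le h, List.take_of_length_le (by omega)]
          omega

lemma exchange {a b : ℕ} (hb : 1 ≤ b) (hba : b ≤ a) (m X : Multiset ℕ)
    (hX : X ≤ a ::ₘ b ::ₘ m) :
    ∃ X', X' ≤ (a+1) ::ₘ (b-1) ::ₘ m ∧ Multiset.card X' = Multiset.card X ∧ X.sum ≤ X'.sum := by
  by_cases hmema : a ∈ X
  · have h1 : X.erase a ≤ b ::ₘ m := by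
      have := Multiset.erase_le_erase a hX
      rwa [Multiset.erase_cons_head] at this
    have hXs : X.sum = a + (X.erase a).sum := by
      conv_lhs => rw [← Multiset.cons_erase hmema]
      rw [Multiset.sum_cons]
    have hXc : Multiset.card X = Multiset.card (X.erase a) + 1 := by
      conv_lhs => rw [← Multiset.cons_erase hmema]
      rw [Multiset.card_cons]
    by_cases hmemb : b ∈ X.erase a
    · have h2 : (X.erase a).erase b ≤ m := by
        have := Multiset.erase_le_erase b h1
        rwa [Multiset.erase_cons_head] at this
      have hYs : (X.erase a).sum = b + ((X.erase a).erase b).sum := by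
        conv_lhs => rw [← Multiset.cons_erase hmemb]
        rw [Multiset.sum_cons]
      have hYc : Multiset.card (X.erase a) = Multiset.card ((X.erase a).erase b) + 1 := by
        conv_lhs => rw [← Multiset.cons_erase hmemb]
        rw [Multiset.card_cons]
      refine ⟨(a+1) ::ₘ (b-1) ::ₘ (X.erase a).erase b,
        Multiset.cons_le_cons _ (Multiset.cons_le_cons _ h2), ?_, ?_⟩
      · simp [hXc, hYc]
      · simp only [Multiset.sum_cons, hXs, hYs]
        omega
    · have h2 : X.erase a ≤ m := (Multiset.le_cons_of_notMem hmemb).mp h1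
      refine ⟨(a+1) ::ₘ X.erase a,
        Multiset.cons_le_cons _ (h2.trans (Multiset.le_cons_self _ _)), ?_, ?_⟩
      · simp [hXc]
      · simp only [Multiset.sum_cons, hXs]
        omega
  · have h1 : X ≤ b ::ₘ m := (Multiset.le_cons_of_notMem hmema).mp hX
    by_cases hmemb : b ∈ X
    · have h2 : X.erase b ≤ m := by
        have := Multiset.erase_le_erase b h1
        rwa [Multiset.erase_cons_head] at this
      have hXs : X.sum = b + (X.erase b).sum := by
        conv_lhs => rw [← Multiset.cons_erase hmemb]
        rw [Multiset.sum_cons]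
      have hXc : Multiset.card X = Multiset.card (X.erase b) + 1 := by
        conv_lhs => rw [← Multiset.cons_erase hmemb]
        rw [Multiset.card_cons]
      refine ⟨(a+1) ::ₘ X.erase b,
        Multiset.cons_le_cons _ (h2.trans (Multiset.le_cons_self _ _)), ?_, ?_⟩
      · simp [hXc]
      · simp only [Multiset.sum_cons, hXs]
        omega
    · have h2 : X ≤ m := (Multiset.le_cons_of_notMem hmemb).mp h1
      exact ⟨X, h2.trans ((Multiset.le_cons_self _ _).trans (Multiset.cons_le_cons _
        (Multiset.le_cons_self _ _))), rfl, le_rfl⟩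

lemma topk_mono (s t : Multiset ℕ)
    (hex : ∀ X ≤ s, ∃ X', X' ≤ t ∧ Multiset.card X' = Multiset.card X ∧ X.sum ≤ X'.sum)
    (k : ℕ) :
    (((s.sort (· ≤ ·)).reverse).take k).sum ≤ (((t.sort (· ≤ ·)).reverse).take k).sum := by
  set L := (s.sort (· ≤ ·)).reverse with hL
  set M := (t.sort (· ≤ ·)).reverse with hM
  have hLs : (L : Multiset ℕ) = s := by
    rw [hL, Multiset.coe_reverse, Multiset.sort_eq]
  have hMs : (M : Multiset ℕ) = t := by
    rw [hM, Multiset.coe_reverse, Multiset.sort_eq]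
  have hMsorted : M.Pairwise (· ≥ ·) := by
    rw [hM]
    exact List.pairwise_reverse.mpr (by exact Multiset.pairwise_sort t (· ≤ ·))
  have hXle : ((L.take k : List ℕ) : Multiset ℕ) ≤ s := by
    rw [← hLs]
    exact Multiset.coe_le.mpr (L.take_sublist k).subperm
  obtain ⟨X', hX't, hX'c, hX's⟩ := hex _ hXle
  have hc : Multiset.card X' ≤ k := by
    rw [hX'c, Multiset.coe_card]
    simp
  have := topk_bound M hMsorted k X' (by rwa [hMs]) hc
  calc (L.take k).sum = ((L.take k : List ℕ) : Multiset ℕ).sum := by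
        rw [Multiset.sum_coe]
    _ ≤ X'.sum := hX's
    _ ≤ (M.take k).sum := this
/-- Edge rotation: if `vw ∈ E(G)`, `uw ∉ E(G)` and `deg(u) ≥ deg(v)`, then the
non-increasing degree sequence of `G` is majorized by (and distinct from) that of
`G' = G - vw + uw`. -/
theorem stmt_2 {V : Type*} [Fintype V] [DecidableEq V]
    (G : SimpleGraph V) [DecidableRel G.Adj] (u v w : V)
    (hvw : G.Adj v w) (huw : ¬ G.Adj u w) (huw' : u ≠ w) (huv : u ≠ v)
    (hdeg : G.degree v ≤ G.degree u) :
    let G' : SimpleGraph V := SimpleGraph.fromEdgeSet ((G.edgeSet \ {s(v, w)}) ∪ {s(u, w)})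
    let πG : List ℕ := ((Finset.univ.val.map (fun x => G.degree x)).sort (· ≤ ·)).reverse
    let πG' : List ℕ := ((Finset.univ.val.map (fun x => G'.degree x)).sort (· ≤ ·)).reverse
    (∀ k, (πG.take k).sum ≤ (πG'.take k).sum) ∧ πG.sum = πG'.sum ∧ πG ≠ πG' := by
  intro G' πG πG'
  have hpiG : πG = ((Finset.univ.val.map (fun x => G.degree x)).sort (· ≤ ·)).reverse := rfl
  have hpiG' : πG' = ((Finset.univ.val.map (fun x => G'.degree x)).sort (· ≤ ·)).reverse := rfl
  have hvw' : v ≠ w := hvw.ne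
  have hwu : ¬ G.Adj w u := fun h => huw h.symm
  have hadj : ∀ a b, G'.Adj a b ↔
      ((G.Adj a b ∧ s(a, b) ≠ s(v, w)) ∨ s(a, b) = s(u, w)) := by
    intro a b
    show (SimpleGraph.fromEdgeSet _).Adj a b ↔ _
    rw [SimpleGraph.fromEdgeSet_adj]
    simp only [Set.mem_union, Set.mem_diff, Set.mem_singleton_iff, SimpleGraph.mem_edgeSet]
    constructor
    · tauto
    · rintro (⟨h1, h2⟩ | h)
      · exact ⟨Or.inl ⟨h1, h2⟩, h1.ne⟩
      · refine ⟨Or.inr h, ?_⟩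
        rw [Sym2.eq_iff] at h
        rcases h with ⟨rfl, rfl⟩ | ⟨rfl, rfl⟩
        · exact huw'
        · exact Ne.symm huw'
  -- neighbor sets in G'
  have hNu : G'.neighborFinset u = insert w (G.neighborFinset u) := by
    ext y
    rw [SimpleGraph.mem_neighborFinset, hadj, Finset.mem_insert,
      SimpleGraph.mem_neighborFinset]
    constructor
    · rintro (⟨h1, -⟩ | h)
      · exact Or.inr h1
      · rw [Sym2.eq_iff] at h
        rcases h with ⟨-, rfl⟩ | ⟨rfl, rfl⟩ <;> exact Or.inl rfl
    · rintro (rfl | h)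
      · exact Or.inr (Sym2.eq_iff.mpr (Or.inl ⟨rfl, rfl⟩))
      · refine Or.inl ⟨h, fun he => ?_⟩
        rw [Sym2.eq_iff] at he
        rcases he with ⟨rfl, rfl⟩ | ⟨rfl, rfl⟩
        · exact huv rfl
        · exact huw' rfl
  have hNv : G'.neighborFinset v = (G.neighborFinset v).erase w := by
    ext y
    rw [SimpleGraph.mem_neighborFinset, hadj, Finset.mem_erase,
      SimpleGraph.mem_neighborFinset]
    constructor
    · rintro (⟨h1, h2⟩ | h)
      · refine ⟨fun hy => h2 ?_, h1⟩
        subst hy; rfl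
      · rw [Sym2.eq_iff] at h
        rcases h with ⟨rfl, rfl⟩ | ⟨rfl, rfl⟩
        · exact absurd rfl huv
        · exact absurd rfl hvw'
    · rintro ⟨hne, h⟩
      refine Or.inl ⟨h, fun he => ?_⟩
      rw [Sym2.eq_iff] at he
      rcases he with ⟨-, rfl⟩ | ⟨rfl, rfl⟩
      · exact hne rfl
      · exact hvw' rfl
  have hNw : G'.neighborFinset w = insert u ((G.neighborFinset w).erase v) := by
    ext y
    rw [SimpleGraph.mem_neighborFinset, hadj, Finset.mem_insert, Finset.mem_erase,
      SimpleGraph.mem_neighborFinset]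
    constructor
    · rintro (⟨h1, h2⟩ | h)
      · refine Or.inr ⟨fun hy => h2 ?_, h1⟩
        subst hy
        exact Sym2.eq_iff.mpr (Or.inr ⟨rfl, rfl⟩)
      · rw [Sym2.eq_iff] at h
        rcases h with ⟨rfl, rfl⟩ | ⟨-, rfl⟩
        · exact absurd rfl huw'
        · exact Or.inl rfl
    · rintro (rfl | ⟨hne, h⟩)
      · exact Or.inr (Sym2.eq_iff.mpr (Or.inr ⟨rfl, rfl⟩))
      · refine Or.inl ⟨h, fun he => ?_⟩
        rw [Sym2.eq_iff] at he
        rcases he with ⟨h1, -⟩ | ⟨-, rfl⟩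
        · exact hvw' h1.symm
        · exact hne rfl
  have hNx : ∀ x, x ≠ u → x ≠ v → x ≠ w → G'.neighborFinset x = G.neighborFinset x := by
    intro x hxu hxv hxw
    ext y
    rw [SimpleGraph.mem_neighborFinset, hadj, SimpleGraph.mem_neighborFinset]
    constructor
    · rintro (⟨h1, -⟩ | h)
      · exact h1
      · rw [Sym2.eq_iff] at h
        rcases h with ⟨rfl, rfl⟩ | ⟨rfl, rfl⟩
        · exact absurd rfl hxu
        · exact absurd rfl hxw
    · intro h
      refine Or.inl ⟨h, fun he => ?_⟩
      rw [Sym2.eq_iff] at he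
      rcases he with ⟨rfl, rfl⟩ | ⟨rfl, rfl⟩
      · exact hxv rfl
      · exact hxw rfl
  have hwu' : w ∉ G.neighborFinset u := by simpa using huw
  have hwv : w ∈ G.neighborFinset v := by simpa using hvw
  have hvwmem : v ∈ G.neighborFinset w := by simpa using hvw.symm
  have hunw : u ∉ (G.neighborFinset w).erase v := fun h =>
    hwu (by simpa using Finset.mem_of_mem_erase h)
  have hdu : G'.degree u = G.degree u + 1 := by
    unfold SimpleGraph.degree
    rw [hNu, Finset.card_insert_of_notMem hwu']
  have hdv : G'.degree v = G.degree v - 1 := by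
    unfold SimpleGraph.degree
    rw [hNv, Finset.card_erase_of_mem hwv]
  have hdw : G'.degree w = G.degree w := by
    unfold SimpleGraph.degree
    rw [hNw, Finset.card_insert_of_notMem hunw, Finset.card_erase_of_mem hvwmem]
    have : 0 < (G.neighborFinset w).card := Finset.card_pos.mpr ⟨v, hvwmem⟩
    omega
  have hdx : ∀ x, x ≠ u → x ≠ v → G'.degree x = G.degree x := by
    intro x hxu hxv
    by_cases hxw : x = w
    · subst hxw; exact hdw
    · unfold SimpleGraph.degree
      rw [hNx x hxu hxv hxw]
  have hbpos : 1 ≤ G.degree v := (G.degree_pos_iff_exists_adj v).mpr ⟨w, hvw⟩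
  -- multiset decomposition
  set r : Multiset V := ((Finset.univ.val.erase u).erase v) with hr
  have hnd : (Finset.univ.val (α := V)).Nodup := Finset.univ.nodup
  have hvmem : v ∈ Finset.univ.val.erase u :=
    (Multiset.mem_erase_of_ne (Ne.symm huv)).mpr (Finset.mem_univ_val v)
  have hsplit : (Finset.univ.val : Multiset V) = u ::ₘ v ::ₘ r := by
    rw [hr, Multiset.cons_erase hvmem, Multiset.cons_erase (Finset.mem_univ_val u)]
  have hrx : ∀ x ∈ r, x ≠ u ∧ x ≠ v := by
    intro x hx
    have h1 : x ∈ Finset.univ.val.erase u := Multiset.mem_of_mem_erase hx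
    have hndu : (Finset.univ.val.erase u (α := V)).Nodup := hnd.erase u
    refine ⟨?_, (hndu.mem_erase_iff.mp hx).1⟩
    intro hxe
    subst hxe
    exact hnd.notMem_erase h1
  have hsmap : Finset.univ.val.map (fun x => G.degree x)
      = G.degree u ::ₘ G.degree v ::ₘ r.map (fun x => G.degree x) := by
    rw [hsplit, Multiset.map_cons, Multiset.map_cons]
  have htmap : Finset.univ.val.map (fun x => G'.degree x)
      = (G.degree u + 1) ::ₘ (G.degree v - 1) ::ₘ r.map (fun x => G.degree x) := by
    rw [hsplit, Multiset.map_cons, Multiset.map_cons, hdu, hdv,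
      Multiset.map_congr rfl (fun x hx => hdx x (hrx x hx).1 (hrx x hx).2)]
  refine ⟨?_, ?_, ?_⟩
  · -- majorization
    intro k
    rw [hpiG, hpiG']
    refine topk_mono _ _ ?_ k
    intro X hX
    rw [hsmap] at hX
    obtain ⟨X', h1, h2, h3⟩ := exchange hbpos hdeg _ X hX
    exact ⟨X', by rwa [htmap], h2, h3⟩
  · -- sum equality
    rw [hpiG, hpiG', List.sum_reverse, List.sum_reverse, ← Multiset.sum_coe,
      ← Multiset.sum_coe, Multiset.sort_eq, Multiset.sort_eq, hsmap, htmap]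
    simp only [Multiset.sum_cons]
    omega
  · -- not equal
    intro h
    rw [hpiG, hpiG'] at h
    have hms : Finset.univ.val.map (fun x => G.degree x)
        = Finset.univ.val.map (fun x => G'.degree x) := by
      have h2 := congrArg (fun l : List ℕ => (l : Multiset ℕ)) h
      simpa only [Multiset.coe_reverse, Multiset.sort_eq] using h2
    rw [hsmap, htmap] at hms
    have hcnt := congrArg (Multiset.count (G.degree u + 1)) hms
    simp only [Multiset.count_cons] at hcnt
    split_ifs at hcnt <;> omega
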